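/- arXiv:0710.2258 — 6 statements merged into one kernel-verified Lean document; each statement's English description precedes it below -/
import Mathlib

section
/- Let s ≥ 1, 1 ≤ k ≤ s, let I ⊆ {1,…,s} satisfy |I| ≥ k, let T_1,…,T_s be real numbers, and for every K ⊆ {1,…,s} with |K| ≥ k let ĉ_K be a real number such that ĉ_K ≥ ĉ_I whenever K ⊇ I. If the step-down procedure (Algorithm 2.1) run with statistics (T_i) and critical values (ĉ_K) rejects at least k indices belonging to I, then k-max(T_i : i ∈ I) > ĉ_I. -/
open MeasureTheory Filter

/-- The `k`-th largest of the values `y i`, `i ∈ K` (counted with multiplicity). -/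
noncomputable def kmax {s : ℕ} (k : ℕ) (K : Finset (Fin s)) (y : Fin s → ℝ) : ℝ :=
  ((K.val.map y).sort (· ≤ ·)).getD (K.card - k) 0

/-- The `β`-quantile of a (probability) measure on `ℝ`:
`q_β(L) = inf {x | L((-∞, x]) ≥ β}`. -/
noncomputable def quantile (μ : Measure ℝ) (β : ℝ) : ℝ :=
  sInf {x : ℝ | ENNReal.ofReal β ≤ μ (Set.Iic x)}

/-- The critical value `d̂_{A_j}` of Algorithm 2.1 at a stage where `R` is the set of
previously rejected indices: the maximum of `ĉ_{Rᶜ ∪ I'}` over `I' ⊆ R` with `|I'| = k - 1`. -/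
noncomputable def dcrit {s : ℕ} (k : ℕ) (c : Finset (Fin s) → ℝ) (R : Finset (Fin s)) : ℝ :=
  sSup {x : ℝ | ∃ I' ⊆ R, I'.card = k - 1 ∧ x = c (Rᶜ ∪ I')}

/-- One step of the step-down procedure (Algorithm 2.1): given the set `R` of indices
rejected so far, returns the set of indices rejected after performing the next step. -/
noncomputable def stepDownNext {s : ℕ} (k : ℕ) (c : Finset (Fin s) → ℝ) (T : Fin s → ℝ)
    (R : Finset (Fin s)) : Finset (Fin s) :=
  if R = ∅ then Finset.univ.filter (fun i => c Finset.univ < T i)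
  else if R.card < k then R
  else R ∪ Rᶜ.filter (fun i => dcrit k c R < T i)

/-- The rejection set of the step-down procedure (Algorithm 2.1) with statistics `T` and
critical values `c`. -/
noncomputable def stepDownRejections {s : ℕ} (k : ℕ) (c : Finset (Fin s) → ℝ)
    (T : Fin s → ℝ) : Finset (Fin s) :=
  (stepDownNext k c T)^[s] ∅


private lemma kmax_gt_of_card {s k : ℕ} (hk1 : 1 ≤ k) (I : Finset (Fin s)) (hI : k ≤ I.card)
    (T : Fin s → ℝ) {x : ℝ}
    (h : k ≤ (I.filter (fun i => x < T i)).card) : x < kmax k I T := by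
  classical
  set l : List ℝ := ((I.val.map T).sort (· ≤ ·)) with hl
  have hlen : l.length = I.card := by simp [hl]
  have hsorted : l.Pairwise (· ≤ ·) := Multiset.pairwise_sort _ _
  have hidx : I.card - k < l.length := by omega
  have hkmax : kmax k I T = l[I.card - k] := List.getD_eq_getElem _ _ hidx
  by_contra hle
  push_neg at hle
  rw [hkmax] at hle
  have hcount : k ≤ (l.filter (fun a => x < a)).length := by
    have h1 : (↑(l.filter (fun a => x < a)) : Multiset ℝ)
        = (I.val.filter (fun i => x < T i)).map T := by
      rw [← Multiset.filter_coe, hl, Multiset.sort_eq, Multiset.filter_map]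
      rfl
    have h2 : (l.filter (fun a => x < a)).length = (I.filter (fun i => x < T i)).card := by
      have := congrArg Multiset.card h1
      rw [Finset.card_def, Finset.filter_val]
      simpa using this
    omega
  -- all elements of the initial segment are ≤ x
  have htake : ∀ a ∈ l.take (I.card - k + 1), ¬ x < a := by
    intro a ha
    rw [List.mem_take_iff_getElem] at ha
    obtain ⟨m, hm, rfl⟩ := ha
    have hm' : m < l.length := lt_of_lt_of_le hm (min_le_right _ _)
    have hle' : l[m] ≤ l[I.card - k] := by
      have : m ≤ I.card - k := by
        have := lt_of_lt_of_le hm (min_le_left _ _); omega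
      exact hsorted.rel_get_of_le (a := ⟨m, hm'⟩) (b := ⟨I.card - k, hidx⟩) this
    exact not_lt.mpr (le_trans hle' hle)
  have hsplit : l.filter (fun a => x < a)
      = (l.take (I.card - k + 1)).filter (fun a => x < a)
        ++ (l.drop (I.card - k + 1)).filter (fun a => x < a) := by
    rw [← List.filter_append, List.take_append_drop]
  have hnil : (l.take (I.card - k + 1)).filter (fun a => x < a) = [] := by
    rw [List.filter_eq_nil_iff]
    intro a ha
    simpa using htake a ha
  have hlen2 : (l.filter (fun a => x < a)).length ≤ k - 1 := by
    rw [hsplit, hnil]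
    simp only [List.nil_append]
    calc ((l.drop (I.card - k + 1)).filter (fun a => x < a)).length
        ≤ (l.drop (I.card - k + 1)).length := List.length_filter_le _ _
      _ = l.length - (I.card - k + 1) := List.length_drop
      _ ≤ k - 1 := by omega
  omega

private lemma stepdown_invariant {s k : ℕ} (hk1 : 1 ≤ k)
    (I : Finset (Fin s)) (T : Fin s → ℝ) (c : Finset (Fin s) → ℝ)
    (hmono : ∀ K : Finset (Fin s), I ⊆ K → c I ≤ c K) (n : ℕ) :
    (∀ i ∈ ((stepDownNext k c T)^[n] ∅) ∩ I, c I < T i) ∨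
      k ≤ (I.filter (fun i => c I < T i)).card := by
  induction n with
  | zero => left; simp
  | succ n ih =>
    rcases ih with ih | ih
    · rw [Function.iterate_succ_apply']
      set R := (stepDownNext k c T)^[n] ∅ with hR
      by_cases hR0 : R = ∅
      · left
        intro i hi
        rw [stepDownNext, if_pos hR0, Finset.mem_inter, Finset.mem_filter] at hi
        calc c I ≤ c Finset.univ := hmono _ (Finset.subset_univ I)
          _ < T i := hi.1.2
      · by_cases hRk : R.card < k
        · left
          rw [stepDownNext, if_neg hR0, if_pos hRk]
          exact ih
        · push_neg at hRk
          by_cases hcard : k ≤ (R ∩ I).card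
          · right
            refine le_trans hcard (Finset.card_le_card ?_)
            intro i hi
            rw [Finset.mem_inter] at hi
            exact Finset.mem_filter.mpr ⟨hi.2, ih i (Finset.mem_inter.mpr hi)⟩
          · push_neg at hcard
            obtain ⟨I', hsub, hsub2, hcardI'⟩ :=
              Finset.exists_subsuperset_card_eq
                (Finset.inter_subset_left : R ∩ I ⊆ R) (n := k - 1) (by omega) (by omega)
            have hIsub : I ⊆ Rᶜ ∪ I' := by
              intro i hi
              by_cases h : i ∈ R
              · exact Finset.mem_union_right _ (hsub (Finset.mem_inter.mpr ⟨h, hi⟩))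
              · exact Finset.mem_union_left _ (Finset.mem_compl.mpr h)
            have hfin : {x : ℝ | ∃ I' ⊆ R, I'.card = k - 1 ∧ x = c (Rᶜ ∪ I')}.Finite := by
              have hss : {x : ℝ | ∃ I' ⊆ R, I'.card = k - 1 ∧ x = c (Rᶜ ∪ I')}
                  ⊆ (fun I' : Finset (Fin s) => c (Rᶜ ∪ I')) '' Set.univ := by
                rintro x ⟨I', _, _, rfl⟩; exact ⟨I', trivial, rfl⟩
              exact (Set.finite_univ.image _).subset hss
            have hd : c I ≤ dcrit k c R := by
              refine le_trans (hmono _ hIsub) (le_csSup hfin.bddAbove ?_)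
              exact ⟨I', hsub2, hcardI', rfl⟩
            left
            intro i hi
            rw [stepDownNext, if_neg hR0, if_neg (not_lt.mpr hRk)] at hi
            rw [Finset.mem_inter, Finset.mem_union] at hi
            rcases hi.1 with h | h
            · exact ih i (Finset.mem_inter.mpr ⟨h, hi.2⟩)
            · exact lt_of_le_of_lt hd (Finset.mem_filter.mp h).2
    · right; exact ih

/-- if the step-down procedure (Algorithm 2.1), run with statistics `T` and
monotone critical values `c`, rejects at least `k` indices belonging to `I`,
then `k`-max`(T_i : i ∈ I) > ĉ_I`. -/
theorem stmt0 {s k : ℕ} (hs : 1 ≤ s) (hk1 : 1 ≤ k) (hks : k ≤ s)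
    (I : Finset (Fin s)) (hI : k ≤ I.card)
    (T : Fin s → ℝ) (c : Finset (Fin s) → ℝ)
    (hmono : ∀ K : Finset (Fin s), I ⊆ K → c I ≤ c K)
    (hrej : k ≤ ((stepDownRejections k c T) ∩ I).card) :
    c I < kmax k I T := by
  rcases stepdown_invariant hk1 I T c hmono s with h | h
  · apply kmax_gt_of_card hk1 I hI T
    refine le_trans hrej (Finset.card_le_card ?_)
    intro i hi
    rw [Finset.mem_inter] at hi
    exact Finset.mem_filter.mpr ⟨hi.2, h i (Finset.mem_inter.mpr hi)⟩
  · exact kmax_gt_of_card hk1 I hI T h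
end

section
/- (Theorem 2.1) Let (Ω, 𝓕, P) be a probability space, s ≥ 1, 1 ≤ k ≤ s, and let I ⊆ {1,…,s} with |I| ≥ k be the indices of the true hypotheses. Let T_1,…,T_s : Ω → ℝ and, for every K ⊆ {1,…,s} with |K| ≥ k, ĉ_K : Ω → ℝ be measurable maps satisfying ĉ_K(ω) ≥ ĉ_I(ω) for every ω and every K ⊇ I. Run the step-down procedure (Algorithm 2.1) with statistics T_i(ω) and critical values ĉ_K(ω). Then (i) P{at least k indices in I are rejected} ≤ P{k-max(T_i : i ∈ I) > ĉ_I}; and (ii) consequently, if P{k-max(T_i : i ∈ I) > ĉ_I} ≤ α for a given α ∈ (0,1), then the probability of rejecting at least k indices in I (the k-FWER) is at most α. -/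
open MeasureTheory Filter

lemma kmax_gt {s k : ℕ} (hk1 : 1 ≤ k) (K : Finset (Fin s)) (hK : k ≤ K.card)
    (y : Fin s → ℝ) (b : ℝ)
    (h : k ≤ (K.filter (fun i => b < y i)).card) : b < kmax k K y := by
  classical
  set M : Multiset ℝ := K.val.map y with hM
  set l : List ℝ := M.sort (· ≤ ·) with hl
  have hlen : l.length = K.card := by
    rw [hl, Multiset.length_sort, hM, Multiset.card_map]
    rfl
  have hilt : K.card - k < l.length := by rw [hlen]; omega
  have hkmax : kmax k K y = l[K.card - k] := by
    rw [kmax, List.getD_eq_getElem _ _ (by simpa only [hl, hM] using hilt)]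
  rw [hkmax]
  by_contra hle
  push_neg at hle
  -- count of elements > b in l is at least k
  have hcount : k ≤ l.countP (fun x => decide (b < x)) := by
    have h2 : (l : Multiset ℝ) = M := Multiset.sort_eq _ _
    have h3 : ((K.filter (fun i => b < y i)).val.map y) ≤ M := by
      rw [hM]
      refine Multiset.map_le_map ?_
      rw [Finset.filter_val]
      exact Multiset.filter_le _ _
    have h4 : ((K.filter (fun i => b < y i)).val.map y).countP (fun x => decide (b < x))
        = (K.filter (fun i => b < y i)).card := by
      rw [Multiset.countP_eq_card.2]
      · rw [Multiset.card_map, Finset.card_def, Finset.filter_val]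
      · intro a ha
        simp only [Multiset.mem_map] at ha
        obtain ⟨i, hi, rfl⟩ := ha
        simp only [Finset.mem_val, Finset.mem_filter] at hi
        simpa using hi.2
    have h5 := Multiset.countP_le_of_le (p := fun x => decide (b < x)) h3
    rw [h4] at h5
    have h6 : M.countP (fun x => decide (b < x)) = l.countP (fun x => decide (b < x)) := by
      rw [← h2, Multiset.coe_countP]
      simp
    omega
  -- but count is at most k - 1
  have hsorted : l.Pairwise (· ≤ ·) := Multiset.pairwise_sort _ _
  set i := K.card - k with hi
  have hsplit : l.countP (fun x => decide (b < x)) =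
      (l.take (i+1)).countP (fun x => decide (b < x)) +
      (l.drop (i+1)).countP (fun x => decide (b < x)) := by
    conv_lhs => rw [← List.take_append_drop (i+1) l]
    rw [List.countP_append]
  have htake : (l.take (i+1)).countP (fun x => decide (b < x)) = 0 := by
    rw [List.countP_eq_zero]
    intro a ha
    rw [List.mem_take_iff_getElem] at ha
    obtain ⟨j, hj, rfl⟩ := ha
    have hji : j ≤ i := by omega
    have hjl : j < l.length := by omega
    have : l[j] ≤ l[i] := by
      have := hsorted.rel_get_of_le (a := ⟨j, hjl⟩) (b := ⟨i, hilt⟩) (Fin.mk_le_mk.2 hji)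
      simpa using this
    simp only [decide_eq_true_eq]
    exact not_lt.2 (this.trans hle)
  have hdrop : (l.drop (i+1)).countP (fun x => decide (b < x)) ≤ k - 1 := by
    calc (l.drop (i+1)).countP _ ≤ (l.drop (i+1)).length := List.countP_le_length
    _ = l.length - (i+1) := List.length_drop
    _ = k - 1 := by omega
  omega

lemma dcrit_ge {s k : ℕ} (hk1 : 1 ≤ k) (c : Finset (Fin s) → ℝ) (I R : Finset (Fin s))
    (hmono : ∀ K, I ⊆ K → c I ≤ c K) (hcard : (R ∩ I).card ≤ k - 1) (hRk : k ≤ R.card) :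
    c I ≤ dcrit k c R := by
  classical
  obtain ⟨I', hI'1, hI'2, hI'3⟩ := Finset.exists_subsuperset_card_eq
    (n := k - 1) (Finset.inter_subset_left : R ∩ I ⊆ R) hcard (by omega)
  have hsub : I ⊆ Rᶜ ∪ I' := by
    intro i hi
    by_cases hiR : i ∈ R
    · exact Finset.mem_union_right _ (hI'1 (Finset.mem_inter.2 ⟨hiR, hi⟩))
    · exact Finset.mem_union_left _ (by simpa using hiR)
  have hmem : c (Rᶜ ∪ I') ∈ {x : ℝ | ∃ I' ⊆ R, I'.card = k - 1 ∧ x = c (Rᶜ ∪ I')} :=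
    ⟨I', hI'2, hI'3, rfl⟩
  have hbdd : BddAbove {x : ℝ | ∃ I' ⊆ R, I'.card = k - 1 ∧ x = c (Rᶜ ∪ I')} := by
    refine ((Set.finite_range c).subset ?_).bddAbove
    rintro x ⟨J, _, _, rfl⟩
    exact ⟨_, rfl⟩
  exact (hmono _ hsub).trans (le_csSup hbdd hmem)

lemma invariant {s k : ℕ} (hk1 : 1 ≤ k) (c : Finset (Fin s) → ℝ) (T : Fin s → ℝ)
    (I : Finset (Fin s)) (hmono : ∀ K, I ⊆ K → c I ≤ c K) :
    ∀ m : ℕ, (∀ j < m, ((((stepDownNext k c T)^[j]) ∅ ∩ I)).card < k) →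
      ∀ i ∈ ((stepDownNext k c T)^[m]) ∅ ∩ I, c I < T i := by
  intro m
  induction m with
  | zero => simp
  | succ m ih =>
    intro hprev i hi
    rw [Function.iterate_succ_apply'] at hi
    set R := ((stepDownNext k c T)^[m]) ∅ with hR
    rw [Finset.mem_inter] at hi
    obtain ⟨hi1, hi2⟩ := hi
    rw [stepDownNext] at hi1
    by_cases hRe : R = ∅
    · rw [if_pos hRe, Finset.mem_filter] at hi1
      exact lt_of_le_of_lt (hmono Finset.univ (Finset.subset_univ I)) hi1.2
    · rw [if_neg hRe] at hi1
      by_cases hRk : R.card < k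
      · rw [if_pos hRk] at hi1
        exact ih (fun j hj => hprev j (by omega)) i (Finset.mem_inter.2 ⟨hi1, hi2⟩)
      · rw [if_neg hRk, Finset.mem_union] at hi1
        rcases hi1 with hi1 | hi1
        · exact ih (fun j hj => hprev j (by omega)) i (Finset.mem_inter.2 ⟨hi1, hi2⟩)
        · rw [Finset.mem_filter] at hi1
          have hIc : (R ∩ I).card ≤ k - 1 := by
            have := hprev m (by omega)
            rw [← hR] at this
            omega
          exact lt_of_le_of_lt (dcrit_ge hk1 c I R hmono hIc (by omega)) hi1.2

lemma key_det {s k : ℕ} (hk1 : 1 ≤ k) (I : Finset (Fin s)) (hI : k ≤ I.card)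
    (T : Fin s → ℝ) (c : Finset (Fin s) → ℝ) (hmono : ∀ K, I ⊆ K → c I ≤ c K)
    (h : k ≤ ((stepDownRejections k c T) ∩ I).card) : c I < kmax k I T := by
  classical
  have hex : ∃ m, k ≤ ((((stepDownNext k c T)^[m]) ∅ ∩ I)).card := ⟨s, h⟩
  set n := Nat.find hex with hn
  have hfind := Nat.find_spec hex
  have hprev : ∀ j < n, ((((stepDownNext k c T)^[j]) ∅ ∩ I)).card < k := by
    intro j hj
    have := Nat.find_min hex hj
    omega
  have hall := invariant hk1 c T I hmono n hprev
  refine kmax_gt hk1 I hI T (c I) ?_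
  calc k ≤ ((((stepDownNext k c T)^[n]) ∅ ∩ I)).card := hfind
  _ ≤ (I.filter (fun i => c I < T i)).card := by
      refine Finset.card_le_card ?_
      intro i hi
      exact Finset.mem_filter.2 ⟨(Finset.mem_inter.1 hi).2, hall i hi⟩

/-- Theorem 2.1: (i) the probability that the step-down procedure rejects at
least `k` indices in `I` is at most `P{k-max(T_i : i ∈ I) > ĉ_I}`; (ii) hence if the latter
probability is at most `α`, the `k`-FWER is at most `α`. -/
theorem stmt1 {Ω : Type*} [MeasurableSpace Ω] (P : Measure Ω) [IsProbabilityMeasure P]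
    {s k : ℕ} (hs : 1 ≤ s) (hk1 : 1 ≤ k) (hks : k ≤ s)
    (I : Finset (Fin s)) (hI : k ≤ I.card)
    (T : Fin s → Ω → ℝ) (hT : ∀ i, Measurable (T i))
    (c : Finset (Fin s) → Ω → ℝ) (hc : ∀ K, Measurable (c K))
    (hmono : ∀ ω : Ω, ∀ K : Finset (Fin s), I ⊆ K → c I ω ≤ c K ω)
    (α : ℝ) (hα : α ∈ Set.Ioo (0:ℝ) 1) :
    P {ω | k ≤ ((stepDownRejections k (fun K => c K ω) (fun i => T i ω)) ∩ I).card}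
        ≤ P {ω | c I ω < kmax k I (fun i => T i ω)} ∧
      (P {ω | c I ω < kmax k I (fun i => T i ω)} ≤ ENNReal.ofReal α →
        P {ω | k ≤ ((stepDownRejections k (fun K => c K ω) (fun i => T i ω)) ∩ I).card}
          ≤ ENNReal.ofReal α) := by
  have hsub : {ω | k ≤ ((stepDownRejections k (fun K => c K ω) (fun i => T i ω)) ∩ I).card}
      ⊆ {ω | c I ω < kmax k I (fun i => T i ω)} := by
    intro ω hω
    exact key_det hk1 I hI (fun i => T i ω) (fun K => c K ω) (hmono ω) hω
  have h1 := measure_mono (μ := P) hsub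
  exact ⟨h1, fun h => h1.trans h⟩
end

section
/- (Corollary 2.1(i)) Let (X, 𝓧) be a measurable space, Ω a family of probability measures on X, and for i = 1,…,s let ω_i ⊆ Ω be the set of measures under which the null hypothesis H_i is true; assume ∩_{i=1}^s ω_i ≠ ∅. For P ∈ Ω put I(P) = {i : P ∈ ω_i}. Let T_1,…,T_s : X → ℝ be measurable test statistics, fix α ∈ (0,1) and 1 ≤ k ≤ s, and assume that for every K ⊆ {1,…,s} with |K| ≥ k the supremum c_K := sup{ q_{1−α}( law under P of k-max(T_i : i ∈ K) ) : P ∈ ∩_{i∈K} ω_i } is a (finite) real number, and that c_K ≥ c_{I(P)} whenever P ∈ Ω has |I(P)| ≥ k and K ⊇ I(P). Then for every P ∈ Ω, the step-down procedure (Algorithm 2.1) with statistics T_i and nonrandom critical values ĉ_K = c_K satisfies P{at least k indices in I(P) are rejected} ≤ α. -/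
open MeasureTheory Filter

open scoped Classical in
/-- The (finite) set `I(P)` of indices of true null hypotheses under `P`. -/
noncomputable def trueSet {X : Type*} [MeasurableSpace X] {s : ℕ}
    (ω : Fin s → Set (Measure X)) (P : Measure X) : Finset (Fin s) :=
  Finset.univ.filter fun i => P ∈ ω i

open List in
/-- For a sorted list, the entry at position `j` exceeds `t` iff at least `length - j`
entries exceed `t`. -/
lemma sorted_getD_lt_iff {t : ℝ} (l : List ℝ) (hl : l.Pairwise (· ≤ ·)) (j : ℕ) (hj : j < l.length) :
    t < l.getD j 0 ↔ l.length - j ≤ (l.filter (fun v => t < v)).length := by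
  rw [List.getD_eq_getElem l 0 hj]
  constructor
  · intro h
    have hall : ∀ v ∈ l.drop j, decide (t < v) = true := by
      intro v hv
      obtain ⟨i, hi, rfl⟩ := List.mem_iff_getElem.1 hv
      rw [List.getElem_drop]
      have hji : j ≤ j + i := Nat.le_add_right _ _
      have := hl.rel_get_of_le (a := ⟨j, hj⟩)
        (b := ⟨j + i, by have := hi; rw [List.length_drop] at this; omega⟩) hji
      simp only [List.get_eq_getElem] at this
      simpa using lt_of_lt_of_le h this
    have h1 : (l.drop j).filter (fun v => t < v) = l.drop j := List.filter_eq_self.2 hall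
    have h2 : ((l.drop j).filter (fun v => t < v)).Sublist (l.filter (fun v => t < v)) :=
      (List.drop_sublist j l).filter _
    have := h2.length_le
    rw [h1, List.length_drop] at this
    exact this
  · intro h
    by_contra hcon
    push_neg at hcon
    have hall : ∀ v ∈ l.take (j+1), (¬ t < v) := by
      intro v hv
      obtain ⟨i, hi, rfl⟩ := List.mem_iff_getElem.1 hv
      rw [List.getElem_take]
      have hij : i ≤ j := by
        have : i < j + 1 := by have := hi; rw [List.length_take] at this; omega
        omega
      have := hl.rel_get_of_le (a := ⟨i, lt_of_le_of_lt hij hj⟩) (b := ⟨j, hj⟩) hij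
      simp only [List.get_eq_getElem] at this
      exact not_lt.2 (le_trans this hcon)
    have h1 : (l.take (j+1)).filter (fun v => ¬ t < v) = l.take (j+1) :=
      List.filter_eq_self.2 (by simpa using hall)
    have h2 : ((l.take (j+1)).filter (fun v => ¬ t < v)).Sublist (l.filter (fun v => ¬ t < v)) :=
      (List.take_sublist (j+1) l).filter _
    have h3 : j + 1 ≤ (l.filter (fun v => ¬ t < v)).length := by
      have := h2.length_le
      rw [h1, List.length_take] at this
      exact le_trans (le_min (le_refl _) (Nat.succ_le_of_lt hj)) this
    have hsum : (l.filter (fun v => t < v)).length + (l.filter (fun v => ¬ t < v)).length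
        = l.length := by
      simp only [← List.countP_eq_length_filter]
      rw [l.length_eq_countP_add_countP (fun v => decide (t < v))]
      congr 1
      apply List.countP_congr
      intro v _
      simp
    omega

/-- `t < kmax k K y` iff at least `k` of the values `y i`, `i ∈ K`, exceed `t`. -/
lemma kmax_lt_iff {s k : ℕ} (hk1 : 1 ≤ k) {K : Finset (Fin s)} (hk : k ≤ K.card)
    (y : Fin s → ℝ) (t : ℝ) :
    t < kmax k K y ↔ k ≤ (K.filter fun i => t < y i).card := by
  set l := ((K.val.map y).sort (· ≤ ·)) with hl
  have hlen : l.length = K.card := by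
    rw [hl, Multiset.length_sort, Multiset.card_map]; rfl
  have hj : K.card - k < l.length := by omega
  have hsorted : l.Pairwise (· ≤ ·) := Multiset.pairwise_sort _ _
  have hfilt : (l.filter (fun v => t < v)).length = (K.filter fun i => t < y i).card := by
    have h1 : ((l : Multiset ℝ).filter (fun v => t < v)).card
        = ((K.val.map y).filter (fun v => t < v)).card := by
      rw [hl, Multiset.sort_eq]
    have h2 : (K.val.map y).filter (fun v => t < v)
        = (K.val.filter (fun i => t < y i)).map y := by
      rw [Multiset.filter_map]; rfl
    have h3 : ((l : Multiset ℝ).filter (fun v => t < v)).card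
        = (l.filter (fun v => t < v)).length := by simp
    rw [← h3, h1, h2, Multiset.card_map]
    rfl
  rw [kmax, ← hl, sorted_getD_lt_iff l hsorted _ hj, hfilt, hlen]
  have : K.card - (K.card - k) = k := by omega
  rw [this]

/-- The `k`-max statistic is measurable. -/
lemma measurable_kmax {X : Type*} [MeasurableSpace X] {s k : ℕ} (hk1 : 1 ≤ k)
    {K : Finset (Fin s)} (hk : k ≤ K.card) (T : Fin s → X → ℝ) (hT : ∀ i, Measurable (T i)) :
    Measurable (fun a => kmax k K (fun i => T i a)) := by
  apply measurable_of_Ioi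
  intro t
  have heq : (fun a => kmax k K (fun i => T i a)) ⁻¹' (Set.Ioi t)
      = ⋃ (S : Finset (Fin s)) (_ : S ⊆ K ∧ S.card = k),
          ⋂ i ∈ (S : Set (Fin s)), T i ⁻¹' Set.Ioi t := by
    ext x
    simp only [Set.mem_preimage, Set.mem_Ioi, Set.mem_iUnion, Set.mem_iInter,
      Finset.mem_coe, exists_prop]
    rw [kmax_lt_iff hk1 hk]
    constructor
    · intro h
      obtain ⟨S, hS, hcard⟩ := Finset.exists_subset_card_eq h
      refine ⟨S, ⟨fun i hi => (Finset.mem_filter.1 (hS hi)).1, hcard⟩,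
        fun i hi => (Finset.mem_filter.1 (hS hi)).2⟩
    · rintro ⟨S, ⟨hSK, hcard⟩, hall⟩
      calc k = S.card := hcard.symm
      _ ≤ _ := Finset.card_le_card fun i hi => Finset.mem_filter.2 ⟨hSK hi, hall i hi⟩
  rw [heq]
  exact MeasurableSet.iUnion fun S => MeasurableSet.iUnion fun _ =>
    MeasurableSet.biInter (Set.to_countable _) fun i _ => (hT i) measurableSet_Ioi

/-- The defining property of the quantile for a probability measure on `ℝ`. -/
lemma ofReal_le_measure_Iic_quantile (μ : Measure ℝ) [IsProbabilityMeasure μ]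
    {β : ℝ} (hβ0 : 0 < β) (hβ1 : β < 1) :
    ENNReal.ofReal β ≤ μ (Set.Iic (quantile μ β)) := by
  set S := {x : ℝ | ENNReal.ofReal β ≤ μ (Set.Iic x)} with hS
  have htop : Tendsto (fun x : ℝ => μ (Set.Iic x)) atTop (nhds (μ Set.univ)) :=
    tendsto_measure_Iic_atTop μ
  have hne : S.Nonempty := by
    have h1 : ENNReal.ofReal β < μ Set.univ := by
      rw [measure_univ]
      exact ENNReal.ofReal_lt_one.2 hβ1
    obtain ⟨x, hx⟩ := (htop.eventually_const_le h1).exists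
    exact ⟨x, hx⟩
  have hbot : Tendsto (fun n : ℕ => μ (Set.Iic (-(n:ℝ)))) atTop (nhds 0) := by
    have h0 : (⋂ n : ℕ, Set.Iic (-(n:ℝ))) = ∅ := by
      ext x
      simp only [Set.mem_iInter, Set.mem_Iic, Set.mem_empty_iff_false, iff_false, not_forall,
        not_le]
      obtain ⟨n, hn⟩ := exists_nat_gt (-x)
      exact ⟨n, by linarith⟩
    have := tendsto_measure_iInter_atTop (μ := μ)
      (fun n : ℕ => (measurableSet_Iic (a := -(n:ℝ))).nullMeasurableSet)
      (fun m n hmn => Set.Iic_subset_Iic.2 (by simp; exact_mod_cast hmn))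
      ⟨0, measure_ne_top _ _⟩
    rw [h0, measure_empty] at this
    exact this
  have hbdd : BddBelow S := by
    have h1 : (0:ENNReal) < ENNReal.ofReal β := ENNReal.ofReal_pos.2 hβ0
    obtain ⟨n, hn⟩ := (hbot.eventually_lt_const h1).exists
    refine ⟨-(n:ℝ), fun x hx => ?_⟩
    by_contra hcon
    push_neg at hcon
    exact absurd (le_trans hx (measure_mono (Set.Iic_subset_Iic.2 hcon.le))) (not_le.2 hn)
  set q := quantile μ β with hq
  have hmem : ∀ n : ℕ, ENNReal.ofReal β ≤ μ (Set.Iic (q + 1/(n+1))) := by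
    intro n
    obtain ⟨x, hxS, hxlt⟩ := Real.lt_sInf_add_pos hne
      (ε := 1/((n:ℝ)+1)) (by positivity)
    exact le_trans hxS (measure_mono (Set.Iic_subset_Iic.2 hxlt.le))
  have hinter : (⋂ n : ℕ, Set.Iic (q + 1/((n:ℝ)+1))) = Set.Iic q := by
    ext x
    simp only [Set.mem_iInter, Set.mem_Iic]
    constructor
    · intro h
      have htend : Tendsto (fun n : ℕ => q + 1/((n:ℝ)+1)) atTop (nhds q) := by
        have := tendsto_one_div_add_atTop_nhds_zero_nat (𝕜 := ℝ)
        simpa using tendsto_const_nhds.add this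
      exact ge_of_tendsto' htend h
    · intro h n
      have : (0:ℝ) < 1/((n:ℝ)+1) := by positivity
      linarith
  have htendq : Tendsto (fun n : ℕ => μ (Set.Iic (q + 1/((n:ℝ)+1)))) atTop
      (nhds (μ (Set.Iic q))) := by
    have := tendsto_measure_iInter_atTop (μ := μ)
      (fun n : ℕ => (measurableSet_Iic (a := q + 1/((n:ℝ)+1))).nullMeasurableSet)
      (fun m n hmn => Set.Iic_subset_Iic.2 (by
        have : 1/((n:ℝ)+1) ≤ 1/((m:ℝ)+1) := by
          apply one_div_le_one_div_of_le (by positivity)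
          exact_mod_cast Nat.add_le_add_right hmn 1
        linarith)) ⟨0, measure_ne_top _ _⟩
    rw [hinter] at this
    exact this
  exact ge_of_tendsto' htendq hmem

/-- Quantile bound on upper-tail probabilities. -/
lemma measure_Ioi_quantile (μ : Measure ℝ) [IsProbabilityMeasure μ]
    {β : ℝ} (hβ0 : 0 < β) (hβ1 : β < 1) :
    μ (Set.Ioi (quantile μ β)) ≤ ENNReal.ofReal (1 - β) := by
  have h1 := ofReal_le_measure_Iic_quantile μ hβ0 hβ1
  rw [← Set.compl_Iic, measure_compl measurableSet_Iic (measure_ne_top _ _), measure_univ]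
  calc 1 - μ (Set.Iic (quantile μ β)) ≤ 1 - ENNReal.ofReal β := tsub_le_tsub_left h1 1
  _ = ENNReal.ofReal (1 - β) := by
      rw [← ENNReal.ofReal_one, ← ENNReal.ofReal_sub _ hβ0.le]

/-- The key deterministic property of the step-down procedure: if at least `k` indices of
`I` are rejected, then at least `k` of the statistics `Tx i`, `i ∈ I`, exceed `c I`. -/
lemma stepdown_key {s k : ℕ} (hk1 : 1 ≤ k) (c : Finset (Fin s) → ℝ) (Tx : Fin s → ℝ)
    (I : Finset (Fin s)) (hkI : k ≤ I.card)
    (hmono : ∀ K : Finset (Fin s), I ⊆ K → c I ≤ c K)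
    (h : k ≤ ((stepDownRejections k c Tx) ∩ I).card) :
    k ≤ (I.filter fun i => c I < Tx i).card := by
  classical
  have hdc : ∀ G : Finset (Fin s), k ≤ G.card → (G ∩ I).card < k → c I ≤ dcrit k c G := by
    intro G hkG hGI
    obtain ⟨I', hI'1, hI'2, hI'card⟩ := Finset.exists_subsuperset_card_eq
      (Finset.inter_subset_left (s₂ := I)) (Nat.le_sub_one_of_lt hGI)
      (le_trans (Nat.sub_le k 1) hkG)
    have hsub : I ⊆ Gᶜ ∪ I' := by
      intro i hi
      by_cases hG : i ∈ G
      · exact Finset.mem_union_right _ (hI'1 (Finset.mem_inter.2 ⟨hG, hi⟩))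
      · exact Finset.mem_union_left _ (Finset.mem_compl.2 hG)
    have hmem : c (Gᶜ ∪ I') ∈ {x : ℝ | ∃ I'' ⊆ G, I''.card = k - 1 ∧ x = c (Gᶜ ∪ I'')} :=
      ⟨I', hI'2, hI'card, rfl⟩
    have hfin : {x : ℝ | ∃ I'' ⊆ G, I''.card = k - 1 ∧ x = c (Gᶜ ∪ I'')}.Finite := by
      apply Set.Finite.subset (Set.finite_range (fun J : Finset (Fin s) => c (Gᶜ ∪ J)))
      rintro x ⟨I'', _, _, rfl⟩
      exact ⟨I'', rfl⟩
    exact le_trans (hmono _ hsub) (le_csSup hfin.bddAbove hmem)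
  have inv : ∀ n : ℕ, k ≤ (I.filter fun i => c I < Tx i).card ∨
      ∀ i ∈ (stepDownNext k c Tx)^[n] ∅ ∩ I, c I < Tx i := by
    intro n
    induction n with
    | zero => right; intro i hi; simp at hi
    | succ n ih =>
      rcases ih with h' | h'
      · exact Or.inl h'
      set G := (stepDownNext k c Tx)^[n] ∅ with hG
      by_cases hcard : k ≤ (G ∩ I).card
      · left
        refine le_trans hcard (Finset.card_le_card fun i hi => ?_)
        obtain ⟨h1, h2⟩ := Finset.mem_inter.1 hi
        exact Finset.mem_filter.2 ⟨h2, h' i hi⟩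
      · right
        intro i hi
        rw [Function.iterate_succ_apply', ← hG] at hi
        obtain ⟨hiF, hiI⟩ := Finset.mem_inter.1 hi
        unfold stepDownNext at hiF
        split_ifs at hiF with h0 hlt
        · have := (Finset.mem_filter.1 hiF).2
          exact lt_of_le_of_lt (hmono Finset.univ (Finset.subset_univ I)) this
        · exact h' i (Finset.mem_inter.2 ⟨hiF, hiI⟩)
        · rcases Finset.mem_union.1 hiF with hG' | hnew
          · exact h' i (Finset.mem_inter.2 ⟨hG', hiI⟩)
          · have hdlt := (Finset.mem_filter.1 hnew).2
            exact lt_of_le_of_lt (hdc G (not_lt.1 hlt) (not_le.1 hcard)) hdlt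
  rcases inv s with h' | h'
  · exact h'
  · refine le_trans h (Finset.card_le_card fun i hi => ?_)
    obtain ⟨_, h2⟩ := Finset.mem_inter.1 hi
    exact Finset.mem_filter.2 ⟨h2, h' i hi⟩

/-- Corollary 2.1(i): the step-down procedure with the nonrandom critical
values `c_K = sup { q_{1-α}(law of k-max(T_i : i ∈ K) under P) : P ∈ ∩_{i∈K} ω_i }`,
assumed finite and monotone, controls the `k`-FWER at level `α`. -/
theorem stmt2 {X : Type*} [MeasurableSpace X] {s k : ℕ}
    (hs : 1 ≤ s) (hk1 : 1 ≤ k) (hks : k ≤ s)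
    (Ωs : Set (Measure X)) (ω : Fin s → Set (Measure X))
    (hsub : ∀ i, ω i ⊆ Ωs)
    (hprob : ∀ P ∈ Ωs, IsProbabilityMeasure P)
    (hne : (⋂ i, ω i).Nonempty)
    (T : Fin s → X → ℝ) (hT : ∀ i, Measurable (T i))
    (α : ℝ) (hα : α ∈ Set.Ioo (0:ℝ) 1)
    (c : Finset (Fin s) → ℝ)
    (hc : ∀ K : Finset (Fin s), k ≤ K.card →
      IsLUB {x : ℝ | ∃ P : Measure X, (∀ i ∈ K, P ∈ ω i) ∧
        x = quantile (Measure.map (fun a => kmax k K (fun i => T i a)) P) (1 - α)} (c K))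
    (hmono : ∀ P ∈ Ωs, k ≤ (trueSet ω P).card →
      ∀ K : Finset (Fin s), trueSet ω P ⊆ K → c (trueSet ω P) ≤ c K) :
    ∀ P ∈ Ωs,
      P {x | k ≤ ((stepDownRejections k c (fun i => T i x)) ∩ trueSet ω P).card}
        ≤ ENNReal.ofReal α := by
  intro P hP
  set I := trueSet ω P with hI
  by_cases hkI : k ≤ I.card
  · have hPprob : IsProbabilityMeasure P := hprob P hP
    have hPmem : ∀ i ∈ I, P ∈ ω i := by
      intro i hi
      simp only [hI, trueSet, Finset.mem_filter] at hi
      exact hi.2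
    set f := fun a => kmax k I (fun i => T i a) with hf
    have hfm : Measurable f := measurable_kmax hk1 hkI T hT
    have hμprob : IsProbabilityMeasure (Measure.map f P) :=
      Measure.isProbabilityMeasure_map hfm.aemeasurable
    set q := quantile (Measure.map f P) (1 - α) with hq
    have hq_le : q ≤ c I := (hc I hkI).1 ⟨P, hPmem, rfl⟩
    have hsubev : {x | k ≤ ((stepDownRejections k c (fun i => T i x)) ∩ I).card}
        ⊆ f ⁻¹' Set.Ioi q := by
      intro x hx
      have h1 := stepdown_key hk1 c (fun i => T i x) I hkI (hmono P hP hkI) hx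
      have h2 : c I < f x := (kmax_lt_iff hk1 hkI _ (c I)).2 h1
      exact lt_of_le_of_lt hq_le h2
    calc P {x | k ≤ ((stepDownRejections k c (fun i => T i x)) ∩ I).card}
        ≤ P (f ⁻¹' Set.Ioi q) := measure_mono hsubev
    _ = (Measure.map f P) (Set.Ioi q) := (Measure.map_apply hfm measurableSet_Ioi).symm
    _ ≤ ENNReal.ofReal (1 - (1 - α)) :=
        measure_Ioi_quantile _ (by linarith [hα.2]) (by linarith [hα.1])
    _ = ENNReal.ofReal α := by ring_nf
  · have hempty : {x | k ≤ ((stepDownRejections k c (fun i => T i x)) ∩ I).card} = ∅ := by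
      ext x
      simp only [Set.mem_setOf_eq, Set.mem_empty_iff_false, iff_false, not_le]
      exact lt_of_le_of_lt (Finset.card_le_card Finset.inter_subset_right) (not_le.1 hkI)
    rw [hempty, measure_empty]
    exact zero_le
end

section
/- (Single-step generalized Bonferroni control of the k-FWER) Let (Ω, 𝓕, P) be a probability space, let p̂_1,…,p̂_s be random variables with values in [0,1], let I ⊆ {1,…,s} be the set of indices of true null hypotheses, and assume that for every i ∈ I and every u ∈ [0,1], P{p̂_i ≤ u} ≤ u. Fix 1 ≤ k ≤ s and α ∈ (0,1). Then the procedure that rejects H_i if and only if p̂_i ≤ kα/s makes at least k false rejections with probability at most α: P{ |{ i ∈ I : p̂_i ≤ kα/s }| ≥ k } ≤ α. -/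
open MeasureTheory Filter Topology

/-- single-step generalized Bonferroni control of the `k`-FWER: if the
`p`-values corresponding to true hypotheses `i ∈ I` are valid, then the procedure rejecting
`H_i` iff `p̂_i ≤ kα/s` makes at least `k` false rejections with probability at most `α`. -/
theorem stmt16 {Ω : Type*} [MeasurableSpace Ω] (P : Measure Ω) [IsProbabilityMeasure P]
    {s k : ℕ} (hk1 : 1 ≤ k) (hks : k ≤ s)
    (phat : Fin s → Ω → ℝ) (hmeas : ∀ i, Measurable (phat i))
    (hrange : ∀ i ω, phat i ω ∈ Set.Icc (0:ℝ) 1)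
    (I : Finset (Fin s))
    (hp : ∀ i ∈ I, ∀ u ∈ Set.Icc (0:ℝ) 1, P {ω | phat i ω ≤ u} ≤ ENNReal.ofReal u)
    (α : ℝ) (hα : α ∈ Set.Ioo (0:ℝ) 1) :
    P {ω | k ≤ (I.filter (fun i => phat i ω ≤ (k : ℝ) * α / s)).card}
      ≤ ENNReal.ofReal α := by
  have hs0 : 0 < s := lt_of_lt_of_le hk1 hks
  set u : ℝ := (k : ℝ) * α / s with hu
  have hu0 : 0 ≤ u := by
    have := hα.1.le
    positivity
  have hu1 : u ≤ 1 := by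
    rw [hu, div_le_one (by exact_mod_cast hs0)]
    calc (k:ℝ) * α ≤ (s:ℝ) * 1 := by
          apply mul_le_mul (by exact_mod_cast hks) hα.2.le hα.1.le (by positivity)
      _ = s := by ring
  set B : Fin s → Set Ω := fun i => {ω | phat i ω ≤ u} with hB
  have hBm : ∀ i, MeasurableSet (B i) := fun i => measurableSet_le (hmeas i) measurable_const
  set f : Ω → ENNReal := fun ω => ∑ i ∈ I, (B i).indicator 1 ω with hf
  have hfm : Measurable f := by
    apply Finset.measurable_sum
    intro i _
    exact (measurable_const.indicator (hBm i))
  have hfe : ∀ ω, f ω = ((I.filter (fun i => phat i ω ≤ u)).card : ENNReal) := by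
    intro ω
    rw [hf]
    simp only [Set.indicator_apply, Set.mem_setOf_eq, hB, Pi.one_apply, Finset.card_filter]
    push_cast
    rfl
  -- Markov
  have markov := mul_meas_ge_le_lintegral₀ (μ := P) hfm.aemeasurable (k : ENNReal)
  have hset : {ω | (k : ENNReal) ≤ f ω}
      = {ω | k ≤ (I.filter (fun i => phat i ω ≤ u)).card} := by
    ext ω
    simp [hfe ω, Nat.cast_le]
  rw [hset] at markov
  have hint : ∫⁻ ω, f ω ∂P ≤ (k : ENNReal) * ENNReal.ofReal α := by
    simp only [hf]
    rw [lintegral_finset_sum (f := fun i ω => (B i).indicator 1 ω) I (fun i _ => measurable_const.indicator (hBm i))]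
    have h1 : ∀ i ∈ I, ∫⁻ ω, (B i).indicator 1 ω ∂P ≤ ENNReal.ofReal u := by
      intro i hi
      rw [lintegral_indicator (hBm i)]
      simpa using hp i hi u ⟨hu0, hu1⟩
    calc ∑ i ∈ I, ∫⁻ ω, (B i).indicator 1 ω ∂P
        ≤ ∑ _i ∈ I, ENNReal.ofReal u := Finset.sum_le_sum h1
      _ = (I.card : ENNReal) * ENNReal.ofReal u := by rw [Finset.sum_const, nsmul_eq_mul]
      _ ≤ (s : ENNReal) * ENNReal.ofReal u := by
          gcongr
          exact_mod_cast (Finset.card_le_univ I).trans (by simp)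
      _ = (k : ENNReal) * ENNReal.ofReal α := by
          rw [← ENNReal.ofReal_natCast s, ← ENNReal.ofReal_natCast k,
            ← ENNReal.ofReal_mul (by positivity), ← ENNReal.ofReal_mul (by positivity)]
          congr 1
          field_simp [hu]
          have hs' : (s:ℝ) ≠ 0 := Nat.cast_ne_zero.mpr hs0.ne'
          rw [hu]
          field_simp
  have hk := markov.trans hint
  rw [ENNReal.mul_le_mul_iff_right (by exact_mod_cast hk1.trans_lt' Nat.zero_lt_one |>.ne') (by simp)] at hk
  exact hk
end

section
/- (The generalized Holm step-down procedure controls the k-FWER) Let (Ω, 𝓕, P) be a probability space, let p̂_1,…,p̂_s be random variables with values in [0,1], let I ⊆ {1,…,s} be the set of indices of true null hypotheses, and assume that for every i ∈ I and every u ∈ [0,1], P{p̂_i ≤ u} ≤ u. Fix 1 ≤ k ≤ s and α ∈ (0,1). Then the generalized Holm step-down procedure with constants α_j (defined in the context) satisfies P{at least k indices in I are rejected} ≤ α, for any fixed tie-breaking rule. -/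
open MeasureTheory Filter Topology

/-- The step-down constants `α_j` of the generalized Holm procedure (1-based index `j`):
`α_j = kα/s` for `j ≤ k` and `α_j = kα/(s + k - j)` for `j > k`. -/
noncomputable def holmConst (s k : ℕ) (α : ℝ) (j : Fin s) : ℝ :=
  if (j : ℕ) + 1 ≤ k then (k : ℝ) * α / s
  else (k : ℝ) * α / ((s : ℝ) + (k : ℝ) - ((j : ℕ) + 1))

/-- The rejection set of the generalized Holm step-down procedure, where
`σ ω : Fin s ≃ Fin s` sorts the `p`-values increasingly (a fixed tie-breaking rule):
with `R = max { r : p̂_(j) ≤ α_j for all j = 1,…,r }`, the hypotheses corresponding to the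
`R` smallest `p`-values are rejected. -/
noncomputable def holmRejected {Ω : Type*} {s : ℕ} (k : ℕ) (α : ℝ)
    (phat : Fin s → Ω → ℝ) (σ : Ω → (Fin s ≃ Fin s)) (ω : Ω) : Finset (Fin s) :=
  Finset.univ.filter fun i => ((σ ω).symm i : ℕ) <
    Nat.findGreatest
      (fun r => ∀ j : Fin s, (j : ℕ) < r → phat (σ ω j) ω ≤ holmConst s k α j) s

open scoped ENNReal NNReal

open Finset in
lemma holm_key {s k : ℕ} (hk1 : 1 ≤ k) (α : ℝ) (hα0 : 0 < α)
    (p : Fin s → ℝ) (σ : Fin s ≃ Fin s) (hmono : Monotone fun j => p (σ j))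
    (I : Finset (Fin s)) (hkt : k ≤ I.card)
    (R₀ : ℕ) (hQ : ∀ j : Fin s, (j : ℕ) < R₀ → p (σ j) ≤ holmConst s k α j)
    (hcard : k ≤ (I ∩ (Finset.univ.filter fun i => ((σ.symm i : Fin s) : ℕ) < R₀)).card) :
    k ≤ (I.filter fun i => p i ≤ (k : ℝ) * α / I.card).card := by
  classical
  set S : Finset (Fin s) := Finset.univ.filter fun j => σ j ∈ I ∧ (j : ℕ) < R₀ with hS
  have hSimage : S.image σ = I ∩ (Finset.univ.filter fun i => ((σ.symm i : Fin s) : ℕ) < R₀) := by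
    ext i
    simp only [hS, mem_image, mem_filter, mem_univ, true_and, mem_inter]
    constructor
    · rintro ⟨j, ⟨hjI, hjR⟩, rfl⟩
      simpa [hjI] using hjR
    · rintro ⟨hiI, hiR⟩
      exact ⟨σ.symm i, ⟨by simpa using hiI, hiR⟩, by simp⟩
  have hkS : k ≤ S.card := by
    rw [← Finset.card_image_of_injective S σ.injective, hSimage]; exact hcard
  -- the k-th smallest element of S
  set m := S.card with hm
  have hi0 : k - 1 < m := by omega
  set emb := S.orderEmbOfFin (rfl : S.card = m) with hemb
  set i₀ : Fin m := ⟨k - 1, hi0⟩ with hi₀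
  set r : Fin s := emb i₀ with hr
  have hrS : r ∈ S := S.orderEmbOfFin_mem rfl i₀
  have hrI : σ r ∈ I := (Finset.mem_filter.mp hrS).2.1
  have hrR : (r : ℕ) < R₀ := (Finset.mem_filter.mp hrS).2.2
  -- W = elements of S that are ≤ r; it has exactly k elements
  set W : Finset (Fin s) := S.filter (· ≤ r) with hWdef
  have hWeq : W = (Finset.univ.filter fun i : Fin m => i ≤ i₀).image emb := by
    ext j
    simp only [hWdef, mem_filter, mem_image, mem_univ, true_and]
    constructor
    · rintro ⟨hjS, hjr⟩
      have : j ∈ Set.range emb := by rw [Finset.range_orderEmbOfFin]; exact hjS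
      obtain ⟨i, rfl⟩ := this
      exact ⟨i, emb.le_iff_le.mp hjr, rfl⟩
    · rintro ⟨i, hi, rfl⟩
      exact ⟨S.orderEmbOfFin_mem rfl i, emb.le_iff_le.mpr hi⟩
  have hWcard : W.card = k := by
    rw [hWeq, Finset.card_image_of_injective _ emb.injective]
    have : (Finset.univ.filter fun i : Fin m => i ≤ i₀) = Finset.Iic i₀ := by
      ext i; simp
    rw [this, Fin.card_Iic]
    simp [hi₀]; omega
  -- counting: I.card + (r+1) ≤ s + k
  set V : Finset (Fin s) := Finset.univ.filter fun j => σ j ∈ I with hV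
  have hVcard : V.card = I.card := by
    rw [← Finset.card_image_of_injective V σ.injective]
    congr 1
    ext i
    simp only [hV, mem_image, mem_filter, mem_univ, true_and]
    exact ⟨by rintro ⟨j, hj, rfl⟩; exact hj, fun hi => ⟨σ.symm i, by simpa using hi, by simp⟩⟩
  have hVL : V ∩ Finset.Iic r = W := by
    ext j
    simp only [hV, hWdef, hS, mem_inter, mem_filter, mem_univ, true_and, Finset.mem_Iic]
    constructor
    · rintro ⟨hjI, hjr⟩
      have : (j : ℕ) < R₀ := lt_of_le_of_lt (by exact_mod_cast hjr) hrR
      exact ⟨⟨hjI, this⟩, hjr⟩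
    · rintro ⟨⟨hjI, _⟩, hjr⟩; exact ⟨hjI, hjr⟩
  have hcount : I.card + ((r : ℕ) + 1) ≤ s + k := by
    have h1 := Finset.card_union_add_card_inter V (Finset.Iic r)
    have h2 : (V ∪ Finset.Iic r).card ≤ s := by
      simpa using Finset.card_le_univ (V ∪ Finset.Iic r)
    rw [hVL, hWcard, hVcard, Fin.card_Iic] at h1
    omega
  -- the critical constant at position r is ≤ kα/I.card
  have hIcard0 : (0 : ℝ) < I.card := by
    have : 0 < I.card := by omega
    exact_mod_cast this
  have hkα : (0 : ℝ) ≤ (k : ℝ) * α := by positivity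
  have hconst : holmConst s k α r ≤ (k : ℝ) * α / I.card := by
    unfold holmConst
    split_ifs with h
    · apply div_le_div_of_nonneg_left hkα hIcard0
      have : I.card ≤ s := by
        calc I.card = V.card := hVcard.symm
        _ ≤ s := by simpa using Finset.card_le_univ V
      exact_mod_cast this
    · apply div_le_div_of_nonneg_left hkα hIcard0
      have : (I.card : ℝ) + ((r : ℕ) + 1) ≤ (s : ℝ) + k := by exact_mod_cast hcount
      linarith
  -- conclude
  have hsub : W.image σ ⊆ I.filter fun i => p i ≤ (k : ℝ) * α / I.card := by
    intro i hi
    obtain ⟨j, hjW, rfl⟩ := Finset.mem_image.mp hi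
    obtain ⟨hjS, hjr⟩ := Finset.mem_filter.mp hjW
    refine Finset.mem_filter.mpr ⟨(Finset.mem_filter.mp hjS).2.1, ?_⟩
    calc p (σ j) ≤ p (σ r) := hmono hjr
    _ ≤ holmConst s k α r := hQ r hrR
    _ ≤ (k : ℝ) * α / I.card := hconst
  calc k = (W.image σ).card := by rw [Finset.card_image_of_injective _ σ.injective, hWcard]
  _ ≤ _ := Finset.card_le_card hsub

/-- the generalized Holm step-down procedure controls the `k`-FWER at level
`α`, for any fixed tie-breaking rule (encoded by a sorting permutation `σ ω`). -/
theorem stmt17 {Ω : Type*} [MeasurableSpace Ω] (P : Measure Ω) [IsProbabilityMeasure P]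
    {s k : ℕ} (hs : 1 ≤ s) (hk1 : 1 ≤ k) (hks : k ≤ s)
    (phat : Fin s → Ω → ℝ) (hmeas : ∀ i, Measurable (phat i))
    (hrange : ∀ i ω, phat i ω ∈ Set.Icc (0:ℝ) 1)
    (I : Finset (Fin s))
    (hp : ∀ i ∈ I, ∀ u ∈ Set.Icc (0:ℝ) 1, P {ω | phat i ω ≤ u} ≤ ENNReal.ofReal u)
    (α : ℝ) (hα : α ∈ Set.Ioo (0:ℝ) 1)
    (σ : Ω → (Fin s ≃ Fin s))
    (hσ : ∀ ω : Ω, Monotone fun j => phat (σ ω j) ω) :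
    P {ω | k ≤ (I ∩ holmRejected k α phat σ ω).card} ≤ ENNReal.ofReal α := by
  classical
  obtain ⟨hα0, hα1⟩ := hα
  rcases Nat.lt_or_ge I.card k with hlt | hkt
  · have : {ω | k ≤ (I ∩ holmRejected k α phat σ ω).card} = ∅ := by
      ext ω
      simp only [Set.mem_setOf_eq, Set.mem_empty_iff_false, iff_false, not_le]
      calc (I ∩ holmRejected k α phat σ ω).card ≤ I.card := Finset.card_le_card Finset.inter_subset_left
      _ < k := by omega
    rw [this]
    simp [ENNReal.ofReal]
  -- main case
  have hkt : k ≤ I.card := hkt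
  set u : ℝ := (k : ℝ) * α / I.card with hu
  have hIcard0 : (0 : ℝ) < I.card := by
    have : 0 < I.card := by omega
    exact_mod_cast this
  have hu0 : 0 ≤ u := by positivity
  have huα : u ≤ α := by
    rw [hu, div_le_iff₀ hIcard0]
    have : (k : ℝ) ≤ I.card := by exact_mod_cast hkt
    nlinarith
  have hu1 : u ∈ Set.Icc (0:ℝ) 1 := ⟨hu0, le_trans huα hα1.le⟩
  -- pointwise key step
  have hkey : ∀ ω, k ≤ (I ∩ holmRejected k α phat σ ω).card →
      k ≤ (I.filter fun i => phat i ω ≤ u).card := by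
    intro ω hω
    refine holm_key hk1 α hα0 (fun i => phat i ω) (σ ω) (hσ ω) I hkt
      (Nat.findGreatest (fun r => ∀ j : Fin s, (j : ℕ) < r →
        phat (σ ω j) ω ≤ holmConst s k α j) s) ?_ ?_
    · exact Nat.findGreatest_spec
        (P := fun r => ∀ j : Fin s, (j : ℕ) < r → phat (σ ω j) ω ≤ holmConst s k α j)
        (Nat.zero_le s) (fun j hj => (Nat.not_lt_zero _ hj).elim)
    · exact hω
  -- Markov / union argument
  have hBmeas : ∀ i, MeasurableSet {ω | phat i ω ≤ u} := fun i => (hmeas i) measurableSet_Iic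
  set f : Ω → ℝ≥0∞ := fun ω => ∑ i ∈ I, ({ω | phat i ω ≤ u}).indicator 1 ω with hf
  have hfmeas : Measurable f := by
    apply Finset.measurable_sum
    intro i _
    exact (measurable_const.indicator (hBmeas i)).comp measurable_id
  have hfcount : ∀ ω, f ω = ((I.filter fun i => phat i ω ≤ u).card : ℝ≥0∞) := by
    intro ω
    rw [hf]
    rw [Finset.card_filter]
    push_cast
    apply Finset.sum_congr rfl
    intro i _
    by_cases h : phat i ω ≤ u <;> simp [Set.indicator, h]
  have hsubset : {ω | k ≤ (I ∩ holmRejected k α phat σ ω).card} ⊆ {ω | (k : ℝ≥0∞) ≤ f ω} := by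
    intro ω hω
    rw [Set.mem_setOf_eq, hfcount ω]
    exact_mod_cast hkey ω hω
  have hmarkov : (k : ℝ≥0∞) * P {ω | (k : ℝ≥0∞) ≤ f ω} ≤ ∫⁻ ω, f ω ∂P :=
    mul_meas_ge_le_lintegral₀ hfmeas.aemeasurable k
  have hint : ∫⁻ ω, f ω ∂P ≤ (k : ℝ≥0∞) * ENNReal.ofReal α := by
    simp only [hf]
    rw [lintegral_finset_sum (f := fun i => ({ω | phat i ω ≤ u}).indicator 1) I
      (fun i _ => measurable_const.indicator (hBmeas i))]
    have hone : ∀ i ∈ I, ∫⁻ ω, ({ω | phat i ω ≤ u}).indicator 1 ω ∂P ≤ ENNReal.ofReal u := by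
      intro i hi
      rw [lintegral_indicator (hBmeas i)]
      simp only [Pi.one_apply, MeasureTheory.lintegral_const, one_mul,
        MeasureTheory.Measure.restrict_apply MeasurableSet.univ, Set.univ_inter]
      exact hp i hi u hu1
    calc ∑ i ∈ I, ∫⁻ ω, ({ω | phat i ω ≤ u}).indicator 1 ω ∂P
        ≤ ∑ i ∈ I, ENNReal.ofReal u := Finset.sum_le_sum hone
    _ = (I.card : ℝ≥0∞) * ENNReal.ofReal u := by rw [Finset.sum_const, nsmul_eq_mul]
    _ = (k : ℝ≥0∞) * ENNReal.ofReal α := by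
        rw [← ENNReal.ofReal_natCast I.card, ← ENNReal.ofReal_natCast k,
          ← ENNReal.ofReal_mul (by positivity), ← ENNReal.ofReal_mul (by positivity)]
        congr 1
        rw [hu]
        rw [mul_comm ((I.card : ℝ)) _, mul_div_assoc,
          mul_assoc, div_mul_cancel₀ _ (ne_of_gt hIcard0)]
  calc P {ω | k ≤ (I ∩ holmRejected k α phat σ ω).card}
      ≤ P {ω | (k : ℝ≥0∞) ≤ f ω} := measure_mono hsubset
  _ ≤ ENNReal.ofReal α := by
      rw [← ENNReal.mul_le_mul_iff_right (a := (k : ℝ≥0∞)) (by simp; omega) (by simp)]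
      exact le_trans hmarkov hint
end

section
/- (Appendix B: the single-hypothesis empirical Bayes procedure is anti-conservative under the null) Let Φ and φ denote the cumulative distribution function and the density of the standard normal distribution on ℝ, and fix α ∈ (0, 1/2). For t ∈ ℝ define π(t) = 1 if t ≤ 0 and π(t) = φ(t)/φ(0) if t > 0, and say that t is rejected if π(t)·(1 − Φ(t)) < α (equivalently, t exceeds the cutoff c(t) = Φ^{-1}(1 − α/π(t)), interpreted as −∞ when α/π(t) ≥ 1). If T is a standard normal random variable, then the rejection probability strictly exceeds α: P{ π(T)·(1 − Φ(T)) < α } > α. -/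
open MeasureTheory Filter Topology

section Helpers
open Set ProbabilityTheory Real


noncomputable def phi : ℝ → ℝ := gaussianPDFReal 0 1
noncomputable def F (t : ℝ) : ℝ := ∫ x in Iic t, phi x

lemma phi_cont : Continuous phi := by
  unfold phi gaussianPDFReal
  fun_prop

lemma phi_int : Integrable phi := integrable_gaussianPDFReal 0 1

lemma phi_pos (x : ℝ) : 0 < phi x := gaussianPDFReal_pos 0 1 x one_ne_zero

lemma hF_total : F 0 + ∫ x in Ioi 0, phi x = 1 := by
  rw [F, intervalIntegral.integral_Iic_add_Ioi phi_int.integrableOn phi_int.integrableOn]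
  exact integral_gaussianPDFReal_eq_one 0 one_ne_zero

lemma hF_total' (t : ℝ) : F t + ∫ x in Ioi t, phi x = 1 := by
  rw [F, intervalIntegral.integral_Iic_add_Ioi phi_int.integrableOn phi_int.integrableOn]
  exact integral_gaussianPDFReal_eq_one 0 one_ne_zero

lemma F_zero : F 0 = 1/2 := by
  have h1 : (∫ x in Iic (0:ℝ), phi (-x)) = ∫ x in Ioi (-(0:ℝ)), phi x :=
    integral_comp_neg_Iic 0 phi
  have h2 : ∀ x : ℝ, phi (-x) = phi x := by
    intro x
    unfold phi gaussianPDFReal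
    norm_num
  simp_rw [h2, neg_zero] at h1
  have := hF_total
  rw [← h1] at this
  rw [F] at *
  linarith

lemma F_eq (t : ℝ) : F t = F 0 + ∫ x in (0:ℝ)..t, phi x := by
  have := intervalIntegral.integral_Iic_sub_Iic (f := phi) (μ := volume)
    phi_int.integrableOn phi_int.integrableOn (a := 0) (b := t)
  rw [F, F]; linarith

lemma F_cont : Continuous F := by
  have : Continuous fun t => ∫ x in (0:ℝ)..t, phi x :=
    intervalIntegral.continuous_primitive (fun a b => phi_int.intervalIntegrable) 0
  have he : F = fun t => F 0 + ∫ x in (0:ℝ)..t, phi x := funext F_eq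
  rw [he]
  exact continuous_const.add this

lemma F_strictMono : StrictMono F := by
  intro a b hab
  have h := intervalIntegral.integral_Iic_sub_Iic (f := phi) (μ := volume)
    phi_int.integrableOn phi_int.integrableOn (a := a) (b := b)
  have hpos : 0 < ∫ x in a..b, phi x :=
    intervalIntegral.intervalIntegral_pos_of_pos phi_int.intervalIntegrable phi_pos hab
  rw [F, F]; linarith

lemma F_nonneg (t : ℝ) : 0 ≤ F t := integral_nonneg fun x => (phi_pos x).le

lemma F_le_one (t : ℝ) : F t ≤ 1 := by
  have h := hF_total' t
  have : 0 ≤ ∫ x in Ioi t, phi x := integral_nonneg fun x => (phi_pos x).le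
  linarith

lemma gauss_Iic (t : ℝ) : gaussianReal 0 1 (Iic t) = ENNReal.ofReal (F t) :=
  gaussianReal_apply_eq_integral 0 one_ne_zero (Iic t)

lemma gauss_Ioi (t : ℝ) : gaussianReal 0 1 (Ioi t) = ENNReal.ofReal (1 - F t) := by
  rw [gaussianReal_apply_eq_integral 0 one_ne_zero (Ioi t)]
  congr 1
  have := hF_total' t
  show (∫ x in Ioi t, phi x) = 1 - F t
  linarith

lemma phi_mono {a b : ℝ} (h : a^2 ≤ b^2) : phi b ≤ phi a := by
  unfold phi gaussianPDFReal
  simp only [NNReal.coe_one, mul_one, sub_zero]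
  have hx : rexp (-b^2/2) ≤ rexp (-a^2/2) := Real.exp_le_exp.mpr (by linarith)
  have h2 : (0:ℝ) ≤ (√(2 * π))⁻¹ := by positivity
  exact mul_le_mul_of_nonneg_left hx h2

lemma phi_strict {a b : ℝ} (h : a^2 < b^2) : phi b < phi a := by
  unfold phi gaussianPDFReal
  simp only [NNReal.coe_one, mul_one, sub_zero]
  have hx : rexp (-b^2/2) < rexp (-a^2/2) := Real.exp_lt_exp.mpr (by linarith)
  have h2 : (0:ℝ) < (√(2 * π))⁻¹ := by positivity
  exact mul_lt_mul_of_pos_left hx h2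


open ProbabilityTheory in
/-- Appendix B: for `T` standard normal, the single-hypothesis empirical
Bayes procedure, which rejects when `π(T)(1 - Φ(T)) < α` with `π(t) = 1` for `t ≤ 0` and
`π(t) = φ(t)/φ(0)` for `t > 0`, has rejection probability strictly greater than `α`. -/
theorem stmt18 (α : ℝ) (hα : α ∈ Set.Ioo (0:ℝ) (1/2)) :
    ENNReal.ofReal α <
      gaussianReal 0 1 {t : ℝ |
        (if t ≤ 0 then (1:ℝ) else gaussianPDFReal 0 1 t / gaussianPDFReal 0 1 0) *
          (1 - ((gaussianReal 0 1) (Set.Iic t)).toReal) < α} := by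
  obtain ⟨hα0, hα2⟩ := hα
  have hμuniv : gaussianReal 0 1 (univ : Set ℝ) = 1 := measure_univ
  have htend : Tendsto (fun t => gaussianReal 0 1 (Iic t)) atTop (𝓝 1) := by
    simpa [hμuniv] using tendsto_measure_Iic_atTop (gaussianReal 0 1)
  have hlt1 : ENNReal.ofReal (1 - α) < 1 := by
    rw [← ENNReal.ofReal_one]
    exact (ENNReal.ofReal_lt_ofReal_iff_of_nonneg (by linarith)).mpr (by linarith)
  obtain ⟨b, hb⟩ := (htend.eventually (eventually_gt_nhds hlt1)).exists
  rw [gauss_Iic] at hb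
  have hFb : 1 - α < F b :=
    (ENNReal.ofReal_lt_ofReal_iff_of_nonneg (by linarith)).mp hb
  have hb0 : (0:ℝ) < b := by
    by_contra h
    push_neg at h
    have : F b ≤ F 0 := F_strictMono.monotone h
    rw [F_zero] at this; linarith
  have hivt : Icc (F 0) (F b) ⊆ F '' Icc 0 b :=
    intermediate_value_Icc hb0.le F_cont.continuousOn
  obtain ⟨q, hqmem, hFq⟩ := hivt ⟨by rw [F_zero]; linarith, hFb.le⟩
  have hq0 : 0 < q := by
    rcases lt_or_eq_of_le hqmem.1 with h | h
    · exact h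
    · exfalso; rw [← h, F_zero] at hFq; linarith
  -- continuity step: find q' ∈ (0, q) with (phi q' / phi 0) * (1 - F q') < α
  set g : ℝ → ℝ := fun t => phi t / phi 0 * (1 - F t) with hgdef
  have hgcont : Continuous g := (phi_cont.div_const _).mul (continuous_const.sub F_cont)
  have hgq : g q < α := by
    have hphiq : phi q < phi 0 := phi_strict (by nlinarith)
    have : g q = phi q / phi 0 * α := by rw [hgdef]; simp only; rw [hFq]; ring_nf
    rw [this]
    have h0 : (0:ℝ) < phi 0 := phi_pos 0
    have : phi q / phi 0 < 1 := (div_lt_one h0).mpr hphiq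
    nlinarith
  have hopen : IsOpen {t : ℝ | g t < α} := isOpen_lt hgcont continuous_const
  obtain ⟨ε, hε, hball⟩ := Metric.isOpen_iff.mp hopen q hgq
  set q' : ℝ := max (q - ε/2) (q/2) with hq'def
  have hq'lt : q' < q := by
    apply max_lt <;> [linarith; linarith]
  have hq'pos : 0 < q' := lt_of_lt_of_le (by linarith) (le_max_right _ _)
  have hq'ball : q' ∈ Metric.ball q ε := by
    rw [Metric.mem_ball, Real.dist_eq, abs_of_nonpos (by linarith)]
    have : q - ε/2 ≤ q' := le_max_left _ _
    linarith
  have hgq' : g q' < α := hball hq'ball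
  -- the rejection set contains Ioi q'
  have hsub : Ioi q' ⊆ {t : ℝ |
      (if t ≤ 0 then (1:ℝ) else gaussianPDFReal 0 1 t / gaussianPDFReal 0 1 0) *
        (1 - ((gaussianReal 0 1) (Set.Iic t)).toReal) < α} := by
    intro t ht
    have ht0 : 0 < t := lt_trans hq'pos ht
    have hif : ¬ (t ≤ 0) := not_le.mpr ht0
    simp only [Set.mem_setOf_eq, if_neg hif]
    have htr : ((gaussianReal 0 1) (Set.Iic t)).toReal = F t := by
      rw [gauss_Iic, ENNReal.toReal_ofReal (F_nonneg t)]
    rw [htr]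
    show phi t / phi 0 * (1 - F t) < α
    have hm : phi t ≤ phi q' := phi_mono (by nlinarith [le_of_lt (mem_Ioi.mp ht)])
    have h0 : (0:ℝ) < phi 0 := phi_pos 0
    have h1 : phi t / phi 0 ≤ phi q' / phi 0 := by
      exact div_le_div_of_nonneg_right hm h0.le
    have h2 : 1 - F t ≤ 1 - F q' := by
      have := F_strictMono.monotone (le_of_lt ht); linarith
    have h4 : 0 ≤ 1 - F t := by linarith [F_le_one t]
    calc phi t / phi 0 * (1 - F t) ≤ phi q' / phi 0 * (1 - F q') :=
          mul_le_mul h1 h2 h4 (div_nonneg (phi_pos q').le h0.le)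
      _ = g q' := rfl
      _ < α := hgq'
  calc ENNReal.ofReal α < ENNReal.ofReal (1 - F q') := by
        apply (ENNReal.ofReal_lt_ofReal_iff_of_nonneg hα0.le).mpr
        have : F q' < F q := F_strictMono hq'lt
        linarith [hFq]
    _ = gaussianReal 0 1 (Ioi q') := (gauss_Ioi q').symm
    _ ≤ _ := measure_mono hsub

end Helpers
end
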